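/- Inversion of a simple Moutard transform (Theorem 2, part 1): suppose f₁, f₁⁺ solve ∂_z̄ f₁ = u·conj(f₁), ∂_z̄ f₁⁺ = -conj(u)·conj(f₁⁺), and ω_{f₁,f₁⁺}, ω_{ψ,f₁⁺} are purely imaginary potentials with ω_{f₁,f₁⁺} ≠ 0. Define f̂ = -i·f₁/ω_{f₁,f₁⁺}, f̂⁺ = -i·f₁⁺/ω_{f₁,f₁⁺}, ψ̃ = ψ - f₁·ω_{ψ,f₁⁺}/ω_{f₁,f₁⁺}. Then the function -i·ω_{ψ,f₁⁺}/ω_{f₁,f₁⁺} satisfies ∂_z(-i·ω_{ψ,f₁⁺}/ω_{f₁,f₁⁺}) = ψ̃·f̂⁺ and ∂_z̄(-i·ω_{ψ,f₁⁺}/ω_{f₁,f₁⁺}) = -conj(ψ̃·f̂⁺); similarly 1/ω_{f₁,f₁⁺} satisfies ∂_z(1/ω_{f₁,f₁⁺}) = f̂·f̂⁺ and ∂_z̄(1/ω_{f₁,f₁⁺}) = -conj(f̂·f̂⁺). -/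

import Mathlib

open Complex ComplexConjugate

noncomputable def dz (f : ℂ → ℂ) (z : ℂ) : ℂ :=
  (fderiv ℝ f z 1 - Complex.I * fderiv ℝ f z Complex.I) / 2

noncomputable def dzbar (f : ℂ → ℂ) (z : ℂ) : ℂ :=
  (fderiv ℝ f z 1 + Complex.I * fderiv ℝ f z Complex.I) / 2

lemma inv_deriv {g : ℂ → ℂ} {z : ℂ} (hg : DifferentiableAt ℝ g z) (h0 : g z ≠ 0) :
    HasFDerivAt (fun w => (g w)⁻¹)
      ((-ContinuousLinearMap.mulLeftRight ℝ ℂ (g z)⁻¹ (g z)⁻¹).comp (fderiv ℝ g z)) z :=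
  (hasFDerivAt_inv' h0).comp z hg.hasFDerivAt

lemma dz_inv {g : ℂ → ℂ} {z : ℂ} (hg : DifferentiableAt ℝ g z) (h0 : g z ≠ 0) :
    dz (fun w => (g w)⁻¹) z = -dz g z / g z ^ 2 := by
  have h := (inv_deriv hg h0).fderiv
  simp only [dz, h, ContinuousLinearMap.comp_apply, ContinuousLinearMap.neg_apply,
    ContinuousLinearMap.mulLeftRight_apply]
  field_simp
  ring

lemma dzbar_inv {g : ℂ → ℂ} {z : ℂ} (hg : DifferentiableAt ℝ g z) (h0 : g z ≠ 0) :
    dzbar (fun w => (g w)⁻¹) z = -dzbar g z / g z ^ 2 := by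
  have h := (inv_deriv hg h0).fderiv
  simp only [dzbar, h, ContinuousLinearMap.comp_apply, ContinuousLinearMap.neg_apply,
    ContinuousLinearMap.mulLeftRight_apply]
  field_simp
  ring

lemma dz_mul {f g : ℂ → ℂ} {z : ℂ} (hf : DifferentiableAt ℝ f z)
    (hg : DifferentiableAt ℝ g z) :
    dz (fun w => f w * g w) z = dz f z * g z + f z * dz g z := by
  have h := (show HasFDerivAt (fun w => f w * g w) _ z from hf.hasFDerivAt.mul hg.hasFDerivAt).fderiv
  simp only [dz, h, ContinuousLinearMap.add_apply, ContinuousLinearMap.smul_apply,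
    smul_eq_mul]
  ring

lemma dzbar_mul {f g : ℂ → ℂ} {z : ℂ} (hf : DifferentiableAt ℝ f z)
    (hg : DifferentiableAt ℝ g z) :
    dzbar (fun w => f w * g w) z = dzbar f z * g z + f z * dzbar g z := by
  have h := (show HasFDerivAt (fun w => f w * g w) _ z from hf.hasFDerivAt.mul hg.hasFDerivAt).fderiv
  simp only [dzbar, h, ContinuousLinearMap.add_apply, ContinuousLinearMap.smul_apply,
    smul_eq_mul]
  ring

lemma dz_div {f g : ℂ → ℂ} {z : ℂ} (hf : DifferentiableAt ℝ f z)
    (hg : DifferentiableAt ℝ g z) (h0 : g z ≠ 0) :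
    dz (fun w => f w / g w) z = (dz f z * g z - f z * dz g z) / g z ^ 2 := by
  simp only [div_eq_mul_inv]
  rw [dz_mul hf (show DifferentiableAt ℝ (fun w => (g w)⁻¹) z from hg.inv h0), dz_inv hg h0]
  field_simp
  ring

lemma dzbar_div {f g : ℂ → ℂ} {z : ℂ} (hf : DifferentiableAt ℝ f z)
    (hg : DifferentiableAt ℝ g z) (h0 : g z ≠ 0) :
    dzbar (fun w => f w / g w) z = (dzbar f z * g z - f z * dzbar g z) / g z ^ 2 := by
  simp only [div_eq_mul_inv]
  rw [dzbar_mul hf (show DifferentiableAt ℝ (fun w => (g w)⁻¹) z from hg.inv h0), dzbar_inv hg h0]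
  field_simp
  ring

lemma dz_const_mul (c : ℂ) {f : ℂ → ℂ} {z : ℂ} (hf : DifferentiableAt ℝ f z) :
    dz (fun w => c * f w) z = c * dz f z := by
  have h : HasFDerivAt (fun w => c * f w) (c • fderiv ℝ f z) z :=
    hf.hasFDerivAt.const_mul c
  simp only [dz, h.fderiv, ContinuousLinearMap.smul_apply, smul_eq_mul]
  ring

lemma dzbar_const_mul (c : ℂ) {f : ℂ → ℂ} {z : ℂ} (hf : DifferentiableAt ℝ f z) :
    dzbar (fun w => c * f w) z = c * dzbar f z := by
  have h : HasFDerivAt (fun w => c * f w) (c • fderiv ℝ f z) z :=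
    hf.hasFDerivAt.const_mul c
  simp only [dzbar, h.fderiv, ContinuousLinearMap.smul_apply, smul_eq_mul]
  ring

lemma conj_of_re_zero {w : ℂ} (h : w.re = 0) : conj w = -w := by
  apply Complex.ext <;> simp [h]

/-- Theorem 2, part 1: the explicit functions
-i·ω_{ψ,f₁⁺}/ω_{f₁,f₁⁺} and 1/ω_{f₁,f₁⁺} are potentials for the pairs
(ψ̃, f̂⁺) and (f̂, f̂⁺) respectively. -/
theorem inversion_potentials
    (D : Set ℂ) (hD : IsOpen D) (u f₁ f₁p ψ ωff ωψf : ℂ → ℂ)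
    (hu : ContDiffOn ℝ 1 u D) (hf₁ : ContDiffOn ℝ 1 f₁ D)
    (hf₁p : ContDiffOn ℝ 1 f₁p D) (hψC : ContDiffOn ℝ 1 ψ D)
    (hωffC : ContDiffOn ℝ 1 ωff D) (hωψfC : ContDiffOn ℝ 1 ωψf D)
    (hf : ∀ z ∈ D, dzbar f₁ z = u z * conj (f₁ z))
    (hfp : ∀ z ∈ D, dzbar f₁p z = -conj (u z) * conj (f₁p z))
    (hψ : ∀ z ∈ D, dzbar ψ z = u z * conj (ψ z))
    (hωff1 : ∀ z ∈ D, dz ωff z = f₁ z * f₁p z)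
    (hωff2 : ∀ z ∈ D, dzbar ωff z = -conj (f₁ z * f₁p z))
    (hωffim : ∀ z ∈ D, (ωff z).re = 0)
    (hωψf1 : ∀ z ∈ D, dz ωψf z = ψ z * f₁p z)
    (hωψf2 : ∀ z ∈ D, dzbar ωψf z = -conj (ψ z * f₁p z))
    (hωψfim : ∀ z ∈ D, (ωψf z).re = 0)
    (hne : ∀ z ∈ D, ωff z ≠ 0) :
    ∀ z ∈ D,
      (dz (fun w => -Complex.I * ωψf w / ωff w) z =
          (ψ z - f₁ z * ωψf z / ωff z) * (-Complex.I * f₁p z / ωff z) ∧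
        dzbar (fun w => -Complex.I * ωψf w / ωff w) z =
          -conj ((ψ z - f₁ z * ωψf z / ωff z) * (-Complex.I * f₁p z / ωff z))) ∧
      (dz (fun w => 1 / ωff w) z =
          (-Complex.I * f₁ z / ωff z) * (-Complex.I * f₁p z / ωff z) ∧
        dzbar (fun w => 1 / ωff w) z =
          -conj ((-Complex.I * f₁ z / ωff z) * (-Complex.I * f₁p z / ωff z))) := by
  intro z hz
  have hmem : D ∈ nhds z := hD.mem_nhds hz
  have dωff : DifferentiableAt ℝ ωff z :=
    (hωffC.contDiffAt hmem).differentiableAt one_ne_zero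
  have dωψf : DifferentiableAt ℝ ωψf z :=
    (hωψfC.contDiffAt hmem).differentiableAt one_ne_zero
  have dA : DifferentiableAt ℝ (fun w => -Complex.I * ωψf w) z :=
    dωψf.const_mul _
  have d1 : DifferentiableAt ℝ (fun w : ℂ => (1 : ℂ)) z := differentiableAt_const _
  have h0 := hne z hz
  have hcff : conj (ωff z) = -ωff z := conj_of_re_zero (hωffim z hz)
  have hcψf : conj (ωψf z) = -ωψf z := conj_of_re_zero (hωψfim z hz)
  have key1 : dz (fun w => -Complex.I * ωψf w / ωff w) z
      = (dz (fun w => -Complex.I * ωψf w) z * ωff z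
          - (-Complex.I * ωψf z) * dz ωff z) / ωff z ^ 2 :=
    dz_div dA dωff h0
  have key2 : dzbar (fun w => -Complex.I * ωψf w / ωff w) z
      = (dzbar (fun w => -Complex.I * ωψf w) z * ωff z
          - (-Complex.I * ωψf z) * dzbar ωff z) / ωff z ^ 2 :=
    dzbar_div dA dωff h0
  have key3 : dz (fun w => 1 / ωff w) z
      = (dz (fun w : ℂ => (1:ℂ)) z * ωff z - 1 * dz ωff z) / ωff z ^ 2 :=
    dz_div d1 dωff h0
  have key4 : dzbar (fun w => 1 / ωff w) z
      = (dzbar (fun w : ℂ => (1:ℂ)) z * ωff z - 1 * dzbar ωff z) / ωff z ^ 2 :=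
    dzbar_div d1 dωff h0
  have hcz : dz (fun w : ℂ => (1:ℂ)) z = 0 := by
    simp [dz, fderiv_const]
  have hczb : dzbar (fun w : ℂ => (1:ℂ)) z = 0 := by
    simp [dzbar, fderiv_const]
  rw [dz_const_mul _ dωψf] at key1
  rw [dzbar_const_mul _ dωψf] at key2
  rw [hωψf1 z hz, hωff1 z hz] at key1
  rw [hωψf2 z hz, hωff2 z hz] at key2
  rw [hcz, hωff1 z hz] at key3
  rw [hczb, hωff2 z hz] at key4
  refine ⟨⟨?_, ?_⟩, ?_, ?_⟩
  · rw [key1]; field_simp; ring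
  · rw [key2]
    simp only [map_mul, map_sub, map_div₀, map_neg, Complex.conj_I, hcff, hcψf]
    field_simp
  · rw [key3]; field_simp; ring_nf; rw [Complex.I_sq]; ring
  · rw [key4]
    simp only [map_mul, map_sub, map_div₀, map_neg, Complex.conj_I, hcff]
    field_simp
    ring_nf
    rw [Complex.I_sq]
    ring
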